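/- For a prime p and positive integer r, the number of pairs (i,j) with 0 ≤ i,j < p^r and binomial(i+j, j) not divisible by p equals (p(p+1)/2)^r. -/
import Mathlib

open Finset Nat

private lemma carry_lemma {p : ℕ} (hp : p.Prime) (i j : ℕ) :
    ¬ p ∣ (i + j).choose j ↔
      (i % p + j % p < p ∧ ¬ p ∣ (i / p + j / p).choose (j / p)) := by
  haveI : Fact p.Prime := ⟨hp⟩
  have hmod : (i + j).choose j ≡
      ((i + j) % p).choose (j % p) * ((i + j) / p).choose (j / p) [MOD p] :=
    Choose.choose_modEq_choose_mod_mul_choose_div_nat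
  have hdvd : p ∣ (i + j).choose j ↔
      p ∣ ((i + j) % p).choose (j % p) * ((i + j) / p).choose (j / p) :=
    hmod.dvd_iff dvd_rfl
  by_cases hc : i % p + j % p < p
  · have hm : (i + j) % p = i % p + j % p := Nat.add_mod_of_add_mod_lt hc
    have hd : (i + j) / p = i / p + j / p := by
      rw [Nat.add_div hp.pos, if_neg (not_le_of_gt hc), add_zero]
    rw [hdvd, hm, hd, hp.dvd_mul]
    have hnd : ¬ p ∣ (i % p + j % p).choose (j % p) := by
      intro h
      have h2 : p ∣ (i % p + j % p)! := by
        have := Nat.add_sub_cancel (n := i % p) (m := j % p) ▸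
          Nat.choose_mul_factorial_mul_factorial (Nat.le_add_left (j % p) (i % p))
        exact this ▸ (h.mul_right _).mul_right _
      exact absurd (hp.dvd_factorial.mp h2) (not_le_of_gt hc)
    simp [hnd, hc]
  · push_neg at hc
    have hm : (i + j) % p + p = i % p + j % p := Nat.add_mod_add_of_le_add_mod hc
    have hlt : (i + j) % p < j % p := by
      have := Nat.mod_lt i hp.pos
      omega
    have hz : ((i + j) % p).choose (j % p) = 0 := Nat.choose_eq_zero_of_lt hlt
    simp only [hdvd, hz, zero_mul, dvd_zero, not_true, false_iff, not_and, not_not]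
    intro h
    omega

private lemma gauss_card (p : ℕ) :
    (((Finset.range p) ×ˢ (Finset.range p)).filter
      (fun ab : ℕ × ℕ => ab.1 + ab.2 < p)).card = p * (p + 1) / 2 := by
  rw [Finset.card_filter, Finset.sum_product]
  have h1 : ∀ a ∈ Finset.range p,
      (∑ b ∈ Finset.range p, if a + b < p then 1 else 0) = p - a := by
    intro a ha
    rw [← Finset.card_filter]
    have : (Finset.range p).filter (fun b => a + b < p) = Finset.range (p - a) := by
      ext b
      simp only [Finset.mem_filter, Finset.mem_range, Finset.mem_range] at *
      omega
    rw [this, Finset.card_range]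
  rw [Finset.sum_congr rfl h1]
  have h2 : ∑ a ∈ Finset.range p, (p - a) = ∑ a ∈ Finset.range p, (a + 1) := by
    have := Finset.sum_range_reflect (fun j => j + 1) p
    rw [← this]
    apply Finset.sum_congr rfl
    intro a ha
    simp only [Finset.mem_range] at ha
    omega
  rw [h2]
  have h3 : ∑ a ∈ Finset.range p, (a + 1) = ∑ a ∈ Finset.range (p + 1), a := by
    rw [Finset.sum_range_succ' (fun a => a) p, add_zero]
  rw [h3, Finset.sum_range_id, mul_comm]
  simp

theorem count_nonzero_pascal_pow (p r : ℕ) (hp : p.Prime) (hr : 1 ≤ r) :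
    ((Finset.range (p ^ r) ×ˢ Finset.range (p ^ r)).filter
      (fun ij => ¬ p ∣ (ij.1 + ij.2).choose ij.2)).card = (p * (p + 1) / 2) ^ r := by
  clear hr
  induction r with
  | zero =>
    rw [pow_zero]
    simp [Finset.range_one, Finset.filter_singleton, Nat.dvd_one, hp.ne_one]
  | succ r ih =>
    set T := (Finset.range p ×ˢ Finset.range p).filter
      (fun ab : ℕ × ℕ => ab.1 + ab.2 < p) with hT
    set S := (Finset.range (p ^ r) ×ˢ Finset.range (p ^ r)).filter
      (fun ij : ℕ × ℕ => ¬ p ∣ (ij.1 + ij.2).choose ij.2) with hS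
    have hdivlt : ∀ i : ℕ, i < p ^ (r + 1) → i / p < p ^ r := by
      intro i hi
      rw [Nat.div_lt_iff_lt_mul hp.pos]
      calc i < p ^ (r + 1) := hi
        _ = p ^ r * p := by ring
    have hcomb : ∀ a c : ℕ, a < p → c < p ^ r → a + p * c < p ^ (r + 1) := by
      intro a c ha hc
      calc a + p * c < p + p * c := by omega
        _ = p * (c + 1) := by ring
        _ ≤ p * p ^ r := Nat.mul_le_mul_left p hc
        _ = p ^ (r + 1) := by ring
    have himg : (Finset.range (p ^ (r + 1)) ×ˢ Finset.range (p ^ (r + 1))).filter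
        (fun ij : ℕ × ℕ => ¬ p ∣ (ij.1 + ij.2).choose ij.2)
        = (T ×ˢ S).image
          (fun x : (ℕ × ℕ) × (ℕ × ℕ) => (x.1.1 + p * x.2.1, x.1.2 + p * x.2.2)) := by
      ext ⟨i, j⟩
      simp only [Finset.mem_filter, Finset.mem_product, Finset.mem_range, Finset.mem_image,
        hT, hS]
      constructor
      · rintro ⟨⟨hi, hj⟩, hnd⟩
        rw [carry_lemma hp] at hnd
        refine ⟨((i % p, j % p), (i / p, j / p)),
          ⟨⟨⟨Nat.mod_lt i hp.pos, Nat.mod_lt j hp.pos⟩, hnd.1⟩,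
           ⟨⟨hdivlt i hi, hdivlt j hj⟩, hnd.2⟩⟩, ?_⟩
        simp [Nat.mod_add_div]
      · rintro ⟨⟨⟨a, b⟩, ⟨c, d⟩⟩, ⟨⟨⟨ha, hb⟩, hab⟩, ⟨⟨hc, hd⟩, hnd⟩⟩, heq⟩
        simp only [Prod.mk.injEq] at heq
        obtain ⟨hi, hj⟩ := heq
        have hma : (a + p * c) % p = a := by
          rw [Nat.add_mul_mod_self_left, Nat.mod_eq_of_lt ha]
        have hda : (a + p * c) / p = c := by
          rw [Nat.add_mul_div_left _ _ hp.pos, Nat.div_eq_of_lt ha, zero_add]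
        have hmb : (b + p * d) % p = b := by
          rw [Nat.add_mul_mod_self_left, Nat.mod_eq_of_lt hb]
        have hdb : (b + p * d) / p = d := by
          rw [Nat.add_mul_div_left _ _ hp.pos, Nat.div_eq_of_lt hb, zero_add]
        subst hi hj
        refine ⟨⟨hcomb a c ha hc, hcomb b d hb hd⟩, ?_⟩
        rw [carry_lemma hp, hma, hmb, hda, hdb]
        exact ⟨hab, hnd⟩
    have hinj : Set.InjOn (fun x : (ℕ × ℕ) × (ℕ × ℕ) =>
        (x.1.1 + p * x.2.1, x.1.2 + p * x.2.2)) ↑(T ×ˢ S) := by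
      rintro ⟨⟨a, b⟩, ⟨c, d⟩⟩ h1 ⟨⟨a', b'⟩, ⟨c', d'⟩⟩ h2 heq
      simp only [Finset.coe_filter, Set.mem_setOf_eq, Finset.mem_coe, Finset.mem_product,
        Finset.mem_filter, Finset.mem_range, hT, hS] at h1 h2
      obtain ⟨⟨⟨ha, hb⟩, -⟩, -⟩ := h1
      obtain ⟨⟨⟨ha', hb'⟩, -⟩, -⟩ := h2
      simp only [Prod.mk.injEq] at heq
      obtain ⟨e1, e2⟩ := heq
      have h3 : a = a' := by
        have := congrArg (· % p) e1
        simpa [Nat.add_mul_mod_self_left, Nat.mod_eq_of_lt ha, Nat.mod_eq_of_lt hb,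
          Nat.mod_eq_of_lt ha', Nat.mod_eq_of_lt hb'] using this
      have h4 : b = b' := by
        have := congrArg (· % p) e2
        simpa [Nat.add_mul_mod_self_left, Nat.mod_eq_of_lt ha, Nat.mod_eq_of_lt hb,
          Nat.mod_eq_of_lt ha', Nat.mod_eq_of_lt hb'] using this
      subst h3 h4
      have h5 : c = c' := by
        have := Nat.add_left_cancel e1
        exact Nat.eq_of_mul_eq_mul_left hp.pos this
      have h6 : d = d' := by
        have := Nat.add_left_cancel e2
        exact Nat.eq_of_mul_eq_mul_left hp.pos this
      simp [h5, h6]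
    have hTcard : T.card = p * (p + 1) / 2 := by rw [hT]; exact gauss_card p
    rw [himg, Finset.card_image_of_injOn hinj, Finset.card_product, hTcard, ih,
      pow_succ, mul_comm]
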